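/- Let f, g be twice differentiable on [a,b] with f(a) = g(a) = 0, g > 0 on (a,b], and g' > 0 on [a,b]. Suppose there exists p ∈ (a,b) such that f'/g' is increasing on [a,p] and decreasing on [p,b]. If Y_{f,g}(b) ≥ 0, where Y_{f,g}(x) = (f'(x)/g'(x))·g(x) − f(x), then f/g is increasing on (a,b]. -/

import Mathlib

open Set

lemma deriv_nonneg_of_monotoneOn' {q : ℝ → ℝ} {a p x : ℝ} (hx : x ∈ Ioo a p)
    (hq : MonotoneOn q (Icc a p)) (hd : DifferentiableAt ℝ q x) : 0 ≤ deriv q x := by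
  have h := hd.hasDerivAt
  rw [hasDerivAt_iff_tendsto_slope] at h
  have h2 : Filter.Tendsto (slope q x) (nhdsWithin x (Ioi x)) (nhds (deriv q x)) :=
    h.mono_left (nhdsWithin_mono _ (fun y hy => ne_of_gt hy))
  refine ge_of_tendsto h2 ?_
  filter_upwards [Ioc_mem_nhdsGT_of_mem ⟨le_refl x, hx.2⟩] with y hy
  rw [slope_def_field]
  exact div_nonneg (sub_nonneg.2 (hq ⟨hx.1.le, hx.2.le⟩ ⟨(hx.1.trans hy.1).le, hy.2⟩ hy.1.le))
    (sub_nonneg.2 hy.1.le)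

lemma deriv_nonpos_of_antitoneOn' {q : ℝ → ℝ} {p b x : ℝ} (hx : x ∈ Ioo p b)
    (hq : AntitoneOn q (Icc p b)) (hd : DifferentiableAt ℝ q x) : deriv q x ≤ 0 := by
  have h := hd.hasDerivAt
  rw [hasDerivAt_iff_tendsto_slope] at h
  have h2 : Filter.Tendsto (slope q x) (nhdsWithin x (Ioi x)) (nhds (deriv q x)) :=
    h.mono_left (nhdsWithin_mono _ (fun y hy => ne_of_gt hy))
  refine le_of_tendsto h2 ?_
  filter_upwards [Ioc_mem_nhdsGT_of_mem ⟨le_refl x, hx.2⟩] with y hy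
  rw [slope_def_field]
  exact div_nonpos_of_nonpos_of_nonneg
    (sub_nonpos.2 (hq ⟨hx.1.le, hx.2.le⟩ ⟨(hx.1.trans hy.1).le, hy.2⟩ hy.1.le))
    (sub_nonneg.2 hy.1.le)

theorem third_kind_rule_increasing (a b : ℝ) (hab : a < b) (f g : ℝ → ℝ)
    (hf : ∀ x ∈ Icc a b, DifferentiableAt ℝ f x)
    (hg : ∀ x ∈ Icc a b, DifferentiableAt ℝ g x)
    (hf' : ∀ x ∈ Icc a b, DifferentiableAt ℝ (deriv f) x)
    (hg'' : ∀ x ∈ Icc a b, DifferentiableAt ℝ (deriv g) x)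
    (hfa : f a = 0) (hga : g a = 0)
    (hgpos : ∀ x ∈ Ioc a b, 0 < g x)
    (hg' : ∀ x ∈ Icc a b, 0 < deriv g x)
    (p : ℝ) (hp : p ∈ Ioo a b)
    (hmono : MonotoneOn (fun x => deriv f x / deriv g x) (Icc a p))
    (hanti : AntitoneOn (fun x => deriv f x / deriv g x) (Icc p b))
    (hYb : 0 ≤ deriv f b / deriv g b * g b - f b) :
    MonotoneOn (fun x => f x / g x) (Ioc a b) := by
  set q : ℝ → ℝ := fun x => deriv f x / deriv g x with hq_def
  set Y : ℝ → ℝ := fun x => q x * g x - f x with hY_def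
  have hapIcc : Icc a p ⊆ Icc a b := Icc_subset_Icc le_rfl hp.2.le
  have hpbIcc : Icc p b ⊆ Icc a b := Icc_subset_Icc hp.1.le le_rfl
  have hqdiff : ∀ x ∈ Icc a b, DifferentiableAt ℝ q x := fun x hx =>
    (hf' x hx).div (hg'' x hx) (hg' x hx).ne'
  have hYdiff : ∀ x ∈ Icc a b, DifferentiableAt ℝ Y x := fun x hx =>
    ((hqdiff x hx).mul (hg x hx)).sub (hf x hx)
  have hderivY : ∀ x ∈ Icc a b, deriv Y x = deriv q x * g x := by
    intro x hx
    have : deriv Y x = deriv q x * g x + q x * deriv g x - deriv f x := by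
      rw [hY_def]
      rw [deriv_fun_sub ((hqdiff x hx).fun_mul (hg x hx)) (hf x hx),
        deriv_fun_mul (hqdiff x hx) (hg x hx)]
    rw [this, hq_def]
    have : deriv f x / deriv g x * deriv g x = deriv f x :=
      div_mul_cancel₀ _ (hg' x hx).ne'
    simp only [this]
    ring
  have hYa : Y a = 0 := by simp [hY_def, hga, hfa]
  -- Y monotone on [a,p]
  have hYmono : MonotoneOn Y (Icc a p) := by
    apply monotoneOn_of_deriv_nonneg (convex_Icc a p)
    · exact fun x hx => (hYdiff x (hapIcc hx)).continuousAt.continuousWithinAt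
    · intro x hx
      rw [interior_Icc] at hx
      exact (hYdiff x (hapIcc (Ioo_subset_Icc_self hx))).differentiableWithinAt
    · intro x hx
      rw [interior_Icc] at hx
      have hxab : x ∈ Icc a b := hapIcc (Ioo_subset_Icc_self hx)
      rw [hderivY x hxab]
      exact mul_nonneg (deriv_nonneg_of_monotoneOn' hx hmono (hqdiff x hxab))
        (hgpos x ⟨hx.1, hx.2.le.trans hp.2.le⟩).le
  -- Y antitone on [p,b]
  have hYanti : AntitoneOn Y (Icc p b) := by
    apply antitoneOn_of_deriv_nonpos (convex_Icc p b)
    · exact fun x hx => (hYdiff x (hpbIcc hx)).continuousAt.continuousWithinAt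
    · intro x hx
      rw [interior_Icc] at hx
      exact (hYdiff x (hpbIcc (Ioo_subset_Icc_self hx))).differentiableWithinAt
    · intro x hx
      rw [interior_Icc] at hx
      have hxab : x ∈ Icc a b := hpbIcc (Ioo_subset_Icc_self hx)
      rw [hderivY x hxab]
      exact mul_nonpos_of_nonpos_of_nonneg
        (deriv_nonpos_of_antitoneOn' hx hanti (hqdiff x hxab))
        (hgpos x ⟨hp.1.trans hx.1, hx.2.le⟩).le
  have hYnonneg : ∀ x ∈ Ioc a b, 0 ≤ Y x := by
    intro x hx
    rcases le_or_gt x p with h | h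
    · have := hYmono ⟨le_rfl, hp.1.le⟩ ⟨hx.1.le, h⟩ hx.1.le
      rwa [hYa] at this
    · have := hYanti ⟨h.le, hx.2⟩ ⟨hp.2.le, le_rfl⟩ hx.2
      exact le_trans hYb this
  -- conclude
  apply monotoneOn_of_deriv_nonneg (convex_Ioc a b)
  · intro x hx
    exact (((hf x (Ioc_subset_Icc_self hx)).div (hg x (Ioc_subset_Icc_self hx))
      (hgpos x hx).ne')).continuousAt.continuousWithinAt
  · intro x hx
    rw [interior_Ioc] at hx
    exact ((hf x ⟨hx.1.le, hx.2.le⟩).div (hg x ⟨hx.1.le, hx.2.le⟩)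
      (hgpos x ⟨hx.1, hx.2.le⟩).ne').differentiableWithinAt
  · intro x hx
    rw [interior_Ioc] at hx
    have hxab : x ∈ Icc a b := ⟨hx.1.le, hx.2.le⟩
    have hgx : 0 < g x := hgpos x ⟨hx.1, hx.2.le⟩
    rw [deriv_fun_div (hf x hxab) (hg x hxab) hgx.ne']
    apply div_nonneg _ (sq_nonneg _)
    have h1 : deriv f x / deriv g x * deriv g x = deriv f x :=
      div_mul_cancel₀ _ (hg' x hxab).ne'
    have key : deriv g x * Y x = deriv f x * g x - f x * deriv g x := by
      calc deriv g x * Y x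
          = deriv f x / deriv g x * deriv g x * g x - f x * deriv g x := by
            rw [hY_def, hq_def]; ring
        _ = deriv f x * g x - f x * deriv g x := by rw [h1]
    rw [← key]
    exact mul_nonneg (hg' x hxab).le (hYnonneg x ⟨hx.1, hx.2.le⟩)
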